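/- The 180 relation vectors R^{st,u}_m, as m ranges over the 60 degree-5 exponent vectors with exactly three nonzero entries and as u ranges over the three elements of supp(m) (with {s,t} the remaining two), span a subspace of dimension exactly 120 in the ℚ-vector space V freely spanned by the 300 γ-pairs. -/
import Mathlib
set_option maxRecDepth 8000

/-- The indicator (standard basis) vector of `i : Fin 5`. -/
def e (i : Fin 5) : Fin 5 → ℕ := fun k => if k = i then 1 else 0

/-- The ℚ-vector space freely spanned by unordered pairs of exponent vectors;
the 300 γ-pairs sit among the basis elements. -/
abbrev V : Type := Sym2 (Fin 5 → ℕ) →₀ ℚ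

/-- The basis vector `⟨{a, b}⟩` of `V` indexed by the unordered pair `{a, b}`. -/
noncomputable def gvec (a b : Fin 5 → ℕ) : V := Finsupp.single s(a, b) 1

/-- The relation vector `R^{st,u}_m` attached to a ruling of the compact
divisor `D_m ≅ dP₃`. -/
noncomputable def Rvec (m : Fin 5 → ℕ) (s t u : Fin 5) : V :=
  gvec m (fun k => m k + e s k - e u k) + gvec m (fun k => m k + e t k - e u k)
    - gvec m (fun k => m k + e u k - e t k)
    - gvec m (fun k => m k + e u k - e s k)

/-- The set of the 180 relation vectors `R^{st,u}_m`, as `m` ranges over the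
60 degree-5 exponent vectors with exactly three nonzero entries and `u` over
the three elements of `supp m` (with `{s,t}` the remaining two). -/
def RelSetR : Set V :=
  {v | ∃ (m : Fin 5 → ℕ) (s t u : Fin 5), (∑ i, m i) = 5 ∧
    s ≠ t ∧ s ≠ u ∧ t ≠ u ∧ Function.support m = {s, t, u} ∧
    v = Rvec m s t u}

/-! ### Auxiliary material -/

lemma Rvec_swap (m : Fin 5 → ℕ) (s t u : Fin 5) : Rvec m s t u = Rvec m t s u := by
  unfold Rvec; abel

lemma Rvec_cycle (m : Fin 5 → ℕ) (s t u : Fin 5) :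
    Rvec m s t u + Rvec m t u s + Rvec m u s t = 0 := by
  unfold Rvec; abel

lemma eq_neg_sub_of_add_add_eq_zero {X A B : V} (h : X + A + B = 0) : X = -A - B := by
  have h2 : X = -(A + B) := by rwa [add_assoc, add_eq_zero_iff_eq_neg] at h
  rw [h2]; abel

lemma gvec_apply (a b : Fin 5 → ℕ) (q : Sym2 (Fin 5 → ℕ)) :
    gvec a b q = if s(a, b) = q then 1 else 0 := by
  classical
  rw [gvec, Finsupp.single_apply]

lemma Rvec_apply_zero (m' : Fin 5 → ℕ) (s t u : Fin 5) (m n : Fin 5 → ℕ)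
    (h1 : m' ≠ m) (h2 : m' ≠ n) : Rvec m' s t u s(m, n) = 0 := by
  simp [Rvec, gvec_apply, Sym2.eq_iff, h1, h2]

def Mfun (a b c : Fin 5) (x y z : ℕ) : Fin 5 → ℕ := fun k => x * e a k + y * e b k + z * e c k

lemma sum_e (i : Fin 5) : ∑ k, e i k = 1 := by
  fin_cases i <;> decide

lemma sum_Mfun (a b c : Fin 5) (x y z : ℕ) : ∑ k, Mfun a b c x y z k = x + y + z := by
  simp [Mfun, Finset.sum_add_distrib, ← Finset.mul_sum, sum_e]

lemma Mfun_apply_a (a b c : Fin 5) (x y z : ℕ) (hab : a ≠ b) (hac : a ≠ c) :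
    Mfun a b c x y z a = x := by simp [Mfun, e, hab, hac]

lemma Mfun_apply_b (a b c : Fin 5) (x y z : ℕ) (hab : a ≠ b) (hbc : b ≠ c) :
    Mfun a b c x y z b = y := by simp [Mfun, e, hab.symm, hbc]

lemma Mfun_apply_c (a b c : Fin 5) (x y z : ℕ) (hac : a ≠ c) (hbc : b ≠ c) :
    Mfun a b c x y z c = z := by simp [Mfun, e, hac.symm, hbc.symm]

lemma Mfun_apply_off (a b c : Fin 5) (x y z : ℕ) (k : Fin 5)
    (h1 : k ≠ a) (h2 : k ≠ b) (h3 : k ≠ c) : Mfun a b c x y z k = 0 := by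
  simp [Mfun, e, h1, h2, h3]

lemma support_Mfun (a b c : Fin 5) (x y z : ℕ) (hx : 1 ≤ x) (hy : 1 ≤ y) (hz : 1 ≤ z) :
    Function.support (Mfun a b c x y z) = {a, b, c} := by
  ext k
  simp only [Function.mem_support, Set.mem_insert_iff, Set.mem_singleton_iff, Mfun, e]
  by_cases h1 : k = a <;> by_cases h2 : k = b <;> by_cases h3 : k = c <;>
    simp [h1, h2, h3] <;> omega

lemma Mfun_swap12 (a b c : Fin 5) (x y z : ℕ) :
    Mfun a b c x y z = Mfun b a c y x z := by funext k; simp [Mfun]; ring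

lemma Mfun_swap23 (a b c : Fin 5) (x y z : ℕ) :
    Mfun a b c x y z = Mfun a c b x z y := by funext k; simp [Mfun]; ring

lemma Mfun_inj {a b c a' b' c' : Fin 5} {x y z x' y' z' : ℕ}
    (hab : a < b) (hbc : b < c) (hab' : a' < b') (hbc' : b' < c')
    (hx : 1 ≤ x) (hy : 1 ≤ y) (hz : 1 ≤ z) (hx' : 1 ≤ x') (hy' : 1 ≤ y') (hz' : 1 ≤ z')
    (h : Mfun a b c x y z = Mfun a' b' c' x' y' z') :
    a = a' ∧ b = b' ∧ c = c' ∧ x = x' ∧ y = y' ∧ z = z' := by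
  have hsupp := support_Mfun a b c x y z hx hy hz
  have hsupp' := support_Mfun a' b' c' x' y' z' hx' hy' hz'
  rw [h, hsupp'] at hsupp
  have ha' : a' ∈ ({a, b, c} : Set (Fin 5)) := by rw [← hsupp]; left; rfl
  have hb' : b' ∈ ({a, b, c} : Set (Fin 5)) := by rw [← hsupp]; right; left; rfl
  have hc' : c' ∈ ({a, b, c} : Set (Fin 5)) := by rw [← hsupp]; right; right; rfl
  have ha : a ∈ ({a', b', c'} : Set (Fin 5)) := by rw [hsupp]; left; rfl
  have hb : b ∈ ({a', b', c'} : Set (Fin 5)) := by rw [hsupp]; right; left; rfl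
  have hc : c ∈ ({a', b', c'} : Set (Fin 5)) := by rw [hsupp]; right; right; rfl
  simp only [Set.mem_insert_iff, Set.mem_singleton_iff, Fin.ext_iff] at ha hb hc ha' hb' hc'
  have h1 : a ≠ b := Fin.ne_of_lt hab
  have h2 : b ≠ c := Fin.ne_of_lt hbc
  have h3 : a ≠ c := Fin.ne_of_lt (lt_trans hab hbc)
  rw [Fin.lt_def] at hab hbc hab' hbc'
  have habc : a = a' ∧ b = b' ∧ c = c' := by
    rw [Fin.ext_iff, Fin.ext_iff, Fin.ext_iff]; omega
  obtain ⟨rfl, rfl, rfl⟩ := habc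
  have e1 := congrFun h a
  have e2 := congrFun h b
  have e3 := congrFun h c
  rw [Mfun_apply_a _ _ _ _ _ _ h1 h3, Mfun_apply_a _ _ _ _ _ _ h1 h3] at e1
  rw [Mfun_apply_b _ _ _ _ _ _ h1 h2, Mfun_apply_b _ _ _ _ _ _ h1 h2] at e2
  rw [Mfun_apply_c _ _ _ _ _ _ h3 h2, Mfun_apply_c _ _ _ _ _ _ h3 h2] at e3
  exact ⟨rfl, rfl, rfl, e1, e2, e3⟩

lemma Mfun_ne_two_support {a b c : Fin 5} {x y z : ℕ}
    (hab : a < b) (hbc : b < c) (hx : 1 ≤ x) (hy : 1 ≤ y) (hz : 1 ≤ z)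
    (n : Fin 5 → ℕ) (w1 w2 : Fin 5) (hn : ∀ k, n k ≠ 0 → k = w1 ∨ k = w2) :
    Mfun a b c x y z ≠ n := by
  intro h
  have h1 : a ≠ b := Fin.ne_of_lt hab
  have h2 : b ≠ c := Fin.ne_of_lt hbc
  have h3 : a ≠ c := Fin.ne_of_lt (lt_trans hab hbc)
  have ha := hn a (by rw [← h, Mfun_apply_a _ _ _ _ _ _ h1 h3]; omega)
  have hb := hn b (by rw [← h, Mfun_apply_b _ _ _ _ _ _ h1 h2]; omega)
  have hc := hn c (by rw [← h, Mfun_apply_c _ _ _ _ _ _ h3 h2]; omega)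
  simp only [Fin.ext_iff] at ha hb hc
  rw [Fin.lt_def] at hab hbc
  omega

/-! ### The index type for the 120 distinguished relation vectors -/

abbrev SOrd : Type := {q : Fin 5 × Fin 5 × Fin 5 // q.1 < q.2.1 ∧ q.2.1 < q.2.2}
abbrev Comp : Type := {v : Fin 4 × Fin 4 × Fin 4 //
  1 ≤ (v.1 : ℕ) ∧ 1 ≤ (v.2.1 : ℕ) ∧ 1 ≤ (v.2.2 : ℕ) ∧ (v.1 : ℕ) + (v.2.1 : ℕ) + (v.2.2 : ℕ) = 5}

abbrev I : Type := SOrd × Comp × Fin 2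

noncomputable def f (p : I) : V :=
  if p.2.2 = 0 then
    Rvec (Mfun p.1.1.1 p.1.1.2.1 p.1.1.2.2 ↑p.2.1.1.1 ↑p.2.1.1.2.1 ↑p.2.1.1.2.2)
      p.1.1.1 p.1.1.2.2 p.1.1.2.1
  else
    Rvec (Mfun p.1.1.1 p.1.1.2.1 p.1.1.2.2 ↑p.2.1.1.1 ↑p.2.1.1.2.1 ↑p.2.1.1.2.2)
      p.1.1.2.1 p.1.1.2.2 p.1.1.1

lemma cardSOrd : Fintype.card SOrd = 10 := by decide
lemma cardComp : Fintype.card Comp = 6 := by decide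
lemma cardI : Fintype.card I = 120 := by
  simp [Fintype.card_prod, cardSOrd, cardComp]

/-! ### Span equality -/

lemma range_f_subset : Set.range f ⊆ RelSetR := by
  rintro v ⟨⟨⟨⟨a, b, c⟩, hab, hbc⟩, ⟨⟨x, y, z⟩, hx, hy, hz, hsum⟩, r⟩, rfl⟩
  dsimp only at hab hbc hx hy hz hsum
  have h1 : a ≠ b := Fin.ne_of_lt hab
  have h2 : b ≠ c := Fin.ne_of_lt hbc
  have h3 : a ≠ c := Fin.ne_of_lt (lt_trans hab hbc)
  fin_cases r
  · refine ⟨Mfun a b c ↑x ↑y ↑z, a, c, b, ?_, h3, h1, h2.symm, ?_, by simp [f]⟩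
    · rw [sum_Mfun]; omega
    · rw [support_Mfun _ _ _ _ _ _ hx hy hz]
      ext k; simp; tauto
  · refine ⟨Mfun a b c ↑x ↑y ↑z, b, c, a, ?_, h2, h1.symm, h3.symm, ?_, by simp [f]⟩
    · rw [sum_Mfun]; omega
    · rw [support_Mfun _ _ _ _ _ _ hx hy hz]
      ext k; simp; tauto

lemma canon_mem0 {a b c : Fin 5} (hab : a < b) (hbc : b < c) {x y z : ℕ}
    (hx : 1 ≤ x) (hy : 1 ≤ y) (hz : 1 ≤ z) (hsum : x + y + z = 5) :
    Rvec (Mfun a b c x y z) a c b ∈ Set.range f := by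
  refine ⟨(⟨(a, b, c), hab, hbc⟩, ⟨(⟨x, by omega⟩, ⟨y, by omega⟩, ⟨z, by omega⟩),
    by simpa using ⟨hx, hy, hz, hsum⟩⟩, 0), ?_⟩
  simp [f]

lemma canon_mem1 {a b c : Fin 5} (hab : a < b) (hbc : b < c) {x y z : ℕ}
    (hx : 1 ≤ x) (hy : 1 ≤ y) (hz : 1 ≤ z) (hsum : x + y + z = 5) :
    Rvec (Mfun a b c x y z) b c a ∈ Set.range f := by
  refine ⟨(⟨(a, b, c), hab, hbc⟩, ⟨(⟨x, by omega⟩, ⟨y, by omega⟩, ⟨z, by omega⟩),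
    by simpa using ⟨hx, hy, hz, hsum⟩⟩, 1), ?_⟩
  simp [f]

/-- the canonical span-membership of a "u = max" relation vector -/
lemma canon_mem_max {a b c : Fin 5} (hab : a < b) (hbc : b < c) {x y z : ℕ}
    (hx : 1 ≤ x) (hy : 1 ≤ y) (hz : 1 ≤ z) (hsum : x + y + z = 5) :
    Rvec (Mfun a b c x y z) a b c ∈ Submodule.span ℚ (Set.range f) := by
  have h := eq_neg_sub_of_add_add_eq_zero (Rvec_cycle (Mfun a b c x y z) a b c)
  rw [h, Rvec_swap (Mfun a b c x y z) c a b]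
  exact sub_mem (neg_mem (Submodule.subset_span (canon_mem1 hab hbc hx hy hz hsum)))
    (Submodule.subset_span (canon_mem0 hab hbc hx hy hz hsum))

lemma main_mem (s t u : Fin 5) (hst : s ≠ t) (hsu : s ≠ u) (htu : t ≠ u)
    (x y z : ℕ) (hx : 1 ≤ x) (hy : 1 ≤ y) (hz : 1 ≤ z) (hsum : x + y + z = 5) :
    Rvec (Mfun s t u x y z) s t u ∈ Submodule.span ℚ (Set.range f) := by
  rcases hst.lt_or_gt with h1 | h1 <;> rcases hsu.lt_or_gt with h2 | h2 <;>
    rcases htu.lt_or_gt with h3 | h3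
  · -- s < t, s < u, t < u : order s t u, u max
    exact canon_mem_max h1 h3 hx hy hz hsum
  · -- s < t, s < u, u < t : order s u t, u middle
    rw [Mfun_swap23]
    exact Submodule.subset_span (canon_mem0 h2 h3 hx hz hy (by omega))
  · -- s < t, u < s, t < u: impossible
    exact absurd (lt_trans (lt_trans h2 h1) h3) (lt_irrefl u)
  · -- s < t, u < s : order u s t, u min
    rw [Mfun_swap23, Mfun_swap12]
    exact Submodule.subset_span (canon_mem1 h2 h1 hz hx hy (by omega))
  · -- t < s, s < u : order t s u, u max
    rw [Mfun_swap12, Rvec_swap]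
    exact canon_mem_max h1 h2 hy hx hz (by omega)
  · -- t < s, s < u, u < t : impossible
    exact absurd (lt_trans (lt_trans h1 h2) h3) (lt_irrefl t)
  · -- t < s, u < s, t < u : order t u s, u middle
    rw [Mfun_swap12, Mfun_swap23, Rvec_swap]
    exact Submodule.subset_span (canon_mem0 h3 h2 hy hz hx (by omega))
  · -- t < s, u < s, u < t : order u t s, u min
    rw [Mfun_swap12, Mfun_swap23, Mfun_swap12, Rvec_swap]
    exact Submodule.subset_span (canon_mem1 h3 h1 hz hy hx (by omega))

lemma span_eq : Submodule.span ℚ RelSetR = Submodule.span ℚ (Set.range f) := by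
  apply le_antisymm
  · rw [Submodule.span_le]
    rintro v ⟨m, s, t, u, hsum, hst, hsu, htu, hsupp, rfl⟩
    have hs : m s ≠ 0 := by
      have : s ∈ Function.support m := by rw [hsupp]; left; rfl
      simpa using this
    have ht : m t ≠ 0 := by
      have : t ∈ Function.support m := by rw [hsupp]; right; left; rfl
      simpa using this
    have hu : m u ≠ 0 := by
      have : u ∈ Function.support m := by rw [hsupp]; right; right; rfl
      simpa using this
    have hmeq : m = Mfun s t u (m s) (m t) (m u) := by
      funext k
      by_cases h1 : k = s
      · subst h1; rw [Mfun_apply_a _ _ _ _ _ _ hst hsu]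
      · by_cases h2 : k = t
        · subst h2; rw [Mfun_apply_b _ _ _ _ _ _ hst htu]
        · by_cases h3 : k = u
          · subst h3; rw [Mfun_apply_c _ _ _ _ _ _ hsu htu]
          · rw [Mfun_apply_off _ _ _ _ _ _ _ h1 h2 h3]
            by_contra hk
            have : k ∈ Function.support m := hk
            rw [hsupp] at this
            simp only [Set.mem_insert_iff, Set.mem_singleton_iff] at this
            tauto
    have hsum5 : m s + m t + m u = 5 := by
      have h5 := sum_Mfun s t u (m s) (m t) (m u)
      rw [← hmeq] at h5
      omega
    rw [hmeq]
    exact main_mem s t u hst hsu htu _ _ _ (by omega) (by omega) (by omega) hsum5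
  · exact Submodule.span_mono range_f_subset

/-! ### Linear independence of the 120 relation vectors -/

lemma eval_pair {g : I → ℚ} (hg : ∑ i, g i • f i = 0) {i0 i1 : I} (hne : i0 ≠ i1)
    (q : Sym2 (Fin 5 → ℕ)) (h0 : ∀ j, j ≠ i0 → j ≠ i1 → f j q = 0) :
    g i0 * f i0 q + g i1 * f i1 q = 0 := by
  have h := congrArg (fun w : V => w q) hg
  simp only [Finsupp.finset_sum_apply, Finsupp.smul_apply, smul_eq_mul,
    Finsupp.coe_zero, Pi.zero_apply] at h
  classical
  have h2 : ∑ j ∈ ({i0, i1} : Finset I), g j * f j q = ∑ j, g j * f j q := by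
    refine Finset.sum_subset (Finset.subset_univ _) (fun j _ hj => ?_)
    simp only [Finset.mem_insert, Finset.mem_singleton, not_or] at hj
    rw [h0 j hj.1 hj.2, mul_zero]
  rw [← h, ← h2, Finset.sum_pair hne]

theorem f_li : LinearIndependent ℚ f := by
  rw [Fintype.linearIndependent_iff]
  intro g hg i
  obtain ⟨⟨⟨a, b, c⟩, hS⟩, ⟨⟨x, y, z⟩, hC⟩, r⟩ := i
  obtain ⟨hab, hbc⟩ := hS
  obtain ⟨hx, hy, hz, hsum⟩ := hC
  dsimp only at hab hbc hx hy hz hsum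
  have h1 : a ≠ b := Fin.ne_of_lt hab
  have h2 : b ≠ c := Fin.ne_of_lt hbc
  have h3 : a ≠ c := Fin.ne_of_lt (lt_trans hab hbc)
  set m : Fin 5 → ℕ := Mfun a b c ↑x ↑y ↑z with hm
  have hma : m a = ↑x := by rw [hm, Mfun_apply_a _ _ _ _ _ _ h1 h3]
  have hmb : m b = ↑y := by rw [hm, Mfun_apply_b _ _ _ _ _ _ h1 h2]
  have hmc : m c = ↑z := by rw [hm, Mfun_apply_c _ _ _ _ _ _ h3 h2]
  have hmoff : ∀ k, k ≠ a → k ≠ b → k ≠ c → m k = 0 := fun k u1 u2 u3 => by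
    rw [hm, Mfun_apply_off _ _ _ _ _ _ _ u1 u2 u3]
  set i0 : I := (⟨(a, b, c), hab, hbc⟩, ⟨(x, y, z), hx, hy, hz, hsum⟩, 0) with hi0
  set i1 : I := (⟨(a, b, c), hab, hbc⟩, ⟨(x, y, z), hx, hy, hz, hsum⟩, 1) with hi1
  have hne01 : i0 ≠ i1 := by
    intro h
    have := congrArg (fun p : I => p.2.2) h
    simp [hi0, hi1] at this
  have hf0 : f i0 = Rvec m a c b := by rw [hi0]; simp [f, hm]
  have hf1 : f i1 = Rvec m b c a := by rw [hi1]; simp [f, hm]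
  -- the six neighbouring exponent vectors
  set Aab : Fin 5 → ℕ := fun k => m k + e a k - e b k with hAab
  set Acb : Fin 5 → ℕ := fun k => m k + e c k - e b k with hAcb
  set Abc : Fin 5 → ℕ := fun k => m k + e b k - e c k with hAbc
  set Aba : Fin 5 → ℕ := fun k => m k + e b k - e a k with hAba
  set Aca : Fin 5 → ℕ := fun k => m k + e c k - e a k with hAca
  set Aac : Fin 5 → ℕ := fun k => m k + e a k - e c k with hAac
  have hR0 : Rvec m a c b = gvec m Aab + gvec m Acb - gvec m Abc - gvec m Aba := by
    simp only [Rvec, hAab, hAcb, hAbc, hAba]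
  have hR1 : Rvec m b c a = gvec m Aba + gvec m Aca - gvec m Aac - gvec m Aab := by
    simp only [Rvec, hAba, hAca, hAac, hAab]
  -- pairwise distinctness facts
  have eaa : e a a = 1 := by simp [e]
  have ebb : e b b = 1 := by simp [e]
  have ecc : e c c = 1 := by simp [e]
  have eab : e a b = 0 := by simp [e, h1.symm]
  have eba : e b a = 0 := by simp [e, h1]
  have eac : e a c = 0 := by simp [e, h3.symm]
  have eca : e c a = 0 := by simp [e, h3]
  have ebc : e b c = 0 := by simp [e, h2.symm]
  have ecb : e c b = 0 := by simp [e, h2]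
  have nm_ab : m ≠ Aab := fun h => by
    have := congrFun h b
    simp only [hAab, hmb, ebb, eab] at this; omega
  have nm_cb : m ≠ Acb := fun h => by
    have := congrFun h c
    simp only [hAcb, hmc, ecc, ebc] at this; omega
  have nm_bc : m ≠ Abc := fun h => by
    have := congrFun h b
    simp only [hAbc, hmb, ebb, ecb] at this; omega
  have nm_ba : m ≠ Aba := fun h => by
    have := congrFun h b
    simp only [hAba, hmb, ebb, eab] at this; omega
  have nm_ca : m ≠ Aca := fun h => by
    have := congrFun h c
    simp only [hAca, hmc, ecc, eac] at this; omega
  have nm_ac : m ≠ Aac := fun h => by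
    have := congrFun h a
    simp only [hAac, hma, eaa, eca] at this; omega
  have nab_cb : Aab ≠ Acb := fun h => by
    have := congrFun h a
    simp only [hAab, hAcb, hma, eaa, eba, eca] at this; omega
  have nab_bc : Aab ≠ Abc := fun h => by
    have := congrFun h a
    simp only [hAab, hAbc, hma, eaa, eba, eca] at this; omega
  have nab_ba : Aab ≠ Aba := fun h => by
    have := congrFun h a
    simp only [hAab, hAba, hma, eaa, eba] at this; omega
  have nab_ca : Aab ≠ Aca := fun h => by
    have := congrFun h b
    simp only [hAab, hAca, hmb, ebb, eab, ecb] at this; omega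
  have nab_ac : Aab ≠ Aac := fun h => by
    have := congrFun h b
    simp only [hAab, hAac, hmb, ebb, eab, ecb] at this; omega
  have ncb_bc : Acb ≠ Abc := fun h => by
    have := congrFun h c
    simp only [hAcb, hAbc, hmc, ecc, ebc] at this; omega
  have ncb_ba : Acb ≠ Aba := fun h => by
    have := congrFun h c
    simp only [hAcb, hAba, hmc, ecc, ebc, eac] at this; omega
  have ncb_ca : Acb ≠ Aca := fun h => by
    have := congrFun h a
    simp only [hAcb, hAca, hma, eaa, eca, eba] at this; omega
  have ncb_ac : Acb ≠ Aac := fun h => by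
    have := congrFun h c
    simp only [hAcb, hAac, hmc, ecc, ebc, eac] at this; omega
  have nbc_ba : Abc ≠ Aba := fun h => by
    have := congrFun h a
    simp only [hAbc, hAba, hma, eaa, eba, eca] at this; omega
  have nbc_ca : Abc ≠ Aca := fun h => by
    have := congrFun h b
    simp only [hAbc, hAca, hmb, ebb, ecb] at this; omega
  have nbc_ac : Abc ≠ Aac := fun h => by
    have := congrFun h a
    simp only [hAbc, hAac, hma, eaa, eba, eca] at this; omega
  have nba_ca : Aba ≠ Aca := fun h => by
    have := congrFun h b
    simp only [hAba, hAca, hmb, ebb, ecb] at this; omega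
  have nba_ac : Aba ≠ Aac := fun h => by
    have := congrFun h a
    simp only [hAba, hAac, hma, eaa, eba] at this; omega
  have nca_ac : Aca ≠ Aac := fun h => by
    have := congrFun h a
    simp only [hAca, hAac, hma, eaa, eca] at this; omega
  -- evaluations of the two relation vectors at the six coordinates
  have ev0ba : Rvec m a c b s(m, Aba) = -1 := by
    rw [hR0]
    simp [gvec_apply, Sym2.eq_iff, nab_ba, nbc_ba, ncb_ba, nm_ba, nm_ab.symm, nm_cb.symm,
      nm_bc.symm]
  have ev1ba : Rvec m b c a s(m, Aba) = 1 := by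
    rw [hR1]
    simp [gvec_apply, Sym2.eq_iff, nba_ca.symm, nba_ac.symm, nab_ba, nm_ba, nm_ca.symm,
      nm_ac.symm, nm_ab.symm]
  have ev0ca : Rvec m a c b s(m, Aca) = 0 := by
    rw [hR0]
    simp [gvec_apply, Sym2.eq_iff, nab_ca, ncb_ca, nbc_ca, nba_ca, nm_ca, nm_ab.symm,
      nm_cb.symm, nm_bc.symm, nm_ba.symm]
  have ev1ca : Rvec m b c a s(m, Aca) = 1 := by
    rw [hR1]
    simp [gvec_apply, Sym2.eq_iff, nba_ca, nca_ac.symm, nab_ca, nm_ca, nm_ba.symm,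
      nm_ac.symm, nm_ab.symm]
  have ev0bc : Rvec m a c b s(m, Abc) = -1 := by
    rw [hR0]
    simp [gvec_apply, Sym2.eq_iff, nab_bc, ncb_bc, nbc_ba.symm, nm_bc, nm_ab.symm,
      nm_cb.symm, nm_ba.symm]
  have ev1bc : Rvec m b c a s(m, Abc) = 0 := by
    rw [hR1]
    simp [gvec_apply, Sym2.eq_iff, nbc_ba.symm, nbc_ca.symm, nbc_ac.symm, nab_bc, nm_bc,
      nm_ba.symm, nm_ca.symm, nm_ac.symm, nm_ab.symm]
  have ev0ac : Rvec m a c b s(m, Aac) = 0 := by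
    rw [hR0]
    simp [gvec_apply, Sym2.eq_iff, nab_ac, ncb_ac, nbc_ac, nba_ac, nm_ac, nm_ab.symm,
      nm_cb.symm, nm_bc.symm, nm_ba.symm]
  have ev1ac : Rvec m b c a s(m, Aac) = -1 := by
    rw [hR1]
    simp [gvec_apply, Sym2.eq_iff, nba_ac, nca_ac, nab_ac, nm_ac, nm_ba.symm, nm_ca.symm,
      nm_ab.symm]
  have ev0cb : Rvec m a c b s(m, Acb) = 1 := by
    rw [hR0]
    simp [gvec_apply, Sym2.eq_iff, nab_cb, ncb_bc.symm, ncb_ba.symm, nm_cb, nm_ab.symm,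
      nm_bc.symm, nm_ba.symm]
  have ev1cb : Rvec m b c a s(m, Acb) = 0 := by
    rw [hR1]
    simp [gvec_apply, Sym2.eq_iff, ncb_ba.symm, ncb_ca.symm, ncb_ac.symm, nab_cb, nm_cb,
      nm_ba.symm, nm_ca.symm, nm_ac.symm, nm_ab.symm]
  have ev0ab : Rvec m a c b s(m, Aab) = 1 := by
    rw [hR0]
    simp [gvec_apply, Sym2.eq_iff, nab_cb.symm, nab_bc.symm, nab_ba.symm, nm_ab, nm_cb.symm,
      nm_bc.symm, nm_ba.symm]
  have ev1ab : Rvec m b c a s(m, Aab) = -1 := by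
    rw [hR1]
    simp [gvec_apply, Sym2.eq_iff, nab_ba.symm, nab_ca.symm, nab_ac.symm, nm_ab, nm_ba.symm,
      nm_ca.symm, nm_ac.symm]
  -- vanishing of all other relation vectors at coordinates s(m, n), supp n ⊆ {w1, w2}
  have hvan : ∀ (n : Fin 5 → ℕ), (∃ w1 w2, ∀ k, n k ≠ 0 → k = w1 ∨ k = w2) →
      ∀ j, j ≠ i0 → j ≠ i1 → f j s(m, n) = 0 := by
    rintro n ⟨w1, w2, hn⟩ j hj0 hj1
    obtain ⟨⟨⟨a', b', c'⟩, hab', hbc'⟩, ⟨⟨x', y', z'⟩, hx', hy', hz', hsum'⟩, r'⟩ := j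
    have hne_m : Mfun a' b' c' ↑x' ↑y' ↑z' ≠ m := by
      intro hEq
      rw [hm] at hEq
      obtain ⟨ea, eb, ec, ex, ey, ez⟩ :=
        Mfun_inj hab' hbc' hab hbc hx' hy' hz' hx hy hz hEq
      have ex' : x' = x := Fin.val_injective ex
      have ey' : y' = y := Fin.val_injective ey
      have ez' : z' = z := Fin.val_injective ez
      subst ea; subst eb; subst ec; subst ex'; subst ey'; subst ez'
      fin_cases r'
      · exact hj0 rfl
      · exact hj1 rfl
    have hne_n : Mfun a' b' c' ↑x' ↑y' ↑z' ≠ n :=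
      Mfun_ne_two_support hab' hbc' hx' hy' hz' n w1 w2 hn
    fin_cases r' <;> simp only [f] <;> simp <;>
      exact Rvec_apply_zero _ _ _ _ _ _ hne_m hne_n
  -- now the case analysis on which entry of the composition equals 1
  have key : g i0 = 0 ∧ g i1 = 0 := by
    by_cases hx1 : (x : ℕ) = 1
    · -- partners Aba, Aca have support in {b, c}
      have hnba : ∀ k, Aba k ≠ 0 → k = b ∨ k = c := by
        intro k hk
        by_contra hcon
        push_neg at hcon
        obtain ⟨k1, k2⟩ := hcon
        by_cases ka : k = a
        · subst ka
          simp only [hAba, hma, eaa, eba, hx1] at hk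
          omega
        · rw [hAba] at hk
          simp only [hmoff k ka k1 k2, e, ka, k1, if_neg] at hk
          omega
      have hnca : ∀ k, Aca k ≠ 0 → k = b ∨ k = c := by
        intro k hk
        by_contra hcon
        push_neg at hcon
        obtain ⟨k1, k2⟩ := hcon
        by_cases ka : k = a
        · subst ka
          simp only [hAca, hma, eaa, eca, hx1] at hk
          omega
        · rw [hAca] at hk
          simp only [hmoff k ka k1 k2, e, ka, k2, if_neg] at hk
          omega
      have E1 := eval_pair hg hne01 s(m, Aba) (hvan Aba ⟨b, c, hnba⟩)
      have E2 := eval_pair hg hne01 s(m, Aca) (hvan Aca ⟨b, c, hnca⟩)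
      rw [hf0, hf1, ev0ba, ev1ba] at E1
      rw [hf0, hf1, ev0ca, ev1ca] at E2
      constructor <;> linarith
    · by_cases hz1 : (z : ℕ) = 1
      · -- partners Abc, Aac have support in {a, b}
        have hnbc : ∀ k, Abc k ≠ 0 → k = a ∨ k = b := by
          intro k hk
          by_contra hcon
          push_neg at hcon
          obtain ⟨k1, k2⟩ := hcon
          by_cases kc : k = c
          · subst kc
            simp only [hAbc, hmc, ecc, ebc, hz1] at hk
            omega
          · rw [hAbc] at hk
            simp only [hmoff k k1 k2 kc, e, k2, kc, if_neg] at hk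
            omega
        have hnac : ∀ k, Aac k ≠ 0 → k = a ∨ k = b := by
          intro k hk
          by_contra hcon
          push_neg at hcon
          obtain ⟨k1, k2⟩ := hcon
          by_cases kc : k = c
          · subst kc
            simp only [hAac, hmc, ecc, eac, hz1] at hk
            omega
          · rw [hAac] at hk
            simp only [hmoff k k1 k2 kc, e, k1, kc, if_neg] at hk
            omega
        have E1 := eval_pair hg hne01 s(m, Abc) (hvan Abc ⟨a, b, hnbc⟩)
        have E2 := eval_pair hg hne01 s(m, Aac) (hvan Aac ⟨a, b, hnac⟩)
        rw [hf0, hf1, ev0bc, ev1bc] at E1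
        rw [hf0, hf1, ev0ac, ev1ac] at E2
        constructor <;> linarith
      · -- y = 1; partners Acb, Aab have support in {a, c}
        have hy1 : (y : ℕ) = 1 := by omega
        have hncb : ∀ k, Acb k ≠ 0 → k = a ∨ k = c := by
          intro k hk
          by_contra hcon
          push_neg at hcon
          obtain ⟨k1, k2⟩ := hcon
          by_cases kb : k = b
          · subst kb
            simp only [hAcb, hmb, ebb, ecb, hy1] at hk
            omega
          · rw [hAcb] at hk
            simp only [hmoff k k1 kb k2, e, k2, kb, if_neg] at hk
            omega
        have hnab : ∀ k, Aab k ≠ 0 → k = a ∨ k = c := by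
          intro k hk
          by_contra hcon
          push_neg at hcon
          obtain ⟨k1, k2⟩ := hcon
          by_cases kb : k = b
          · subst kb
            simp only [hAab, hmb, ebb, eab, hy1] at hk
            omega
          · rw [hAab] at hk
            simp only [hmoff k k1 kb k2, e, k1, kb, if_neg] at hk
            omega
        have E1 := eval_pair hg hne01 s(m, Acb) (hvan Acb ⟨a, c, hncb⟩)
        have E2 := eval_pair hg hne01 s(m, Aab) (hvan Aab ⟨a, c, hnab⟩)
        rw [hf0, hf1, ev0cb, ev1cb] at E1
        rw [hf0, hf1, ev0ab, ev1ab] at E2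
        constructor <;> linarith
  fin_cases r
  · exact key.1
  · exact key.2

/-- The 180 relation vectors `R^{st,u}_m` span a subspace of dimension
exactly 120. -/
theorem rank_of_dP3_relations :
    Module.finrank ℚ (Submodule.span ℚ RelSetR) = 120 := by
  rw [span_eq, finrank_span_eq_card f_li, cardI]
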